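/- Let X be a pseudocyclic scheme of degree n and valency k ≥ 2, meaning that every irreflexive basis relation s satisfies n_s = k and c(s) = k − 1. If n > 3k⁶, then X is saturated, i.e., every set of at most four elements of S_k has a common neighbor in the graph 𝔛. -/

import Mathlib

open Finset

abbrev BRel (Ω : Type*) := Finset (Ω × Ω)

variable {Ω : Type*} [Fintype Ω] [DecidableEq Ω]

/-- The diagonal relation `1_Ω`. -/
def diagRel (Ω : Type*) [Fintype Ω] [DecidableEq Ω] : BRel Ω :=
  Finset.univ.filter (fun p => p.1 = p.2)

/-- The converse relation `r*`. -/
def convRel (r : BRel Ω) : BRel Ω := r.image Prod.swap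

/-- Relational composition `a ∘ b`. -/
def compBRel (a b : BRel Ω) : BRel Ω :=
  Finset.univ.filter (fun p => ∃ γ, (p.1, γ) ∈ a ∧ (γ, p.2) ∈ b)

/-- An association scheme on a finite set `Ω`: a partition `S` of `Ω × Ω` into nonempty
basis relations, containing the diagonal, closed under converse, with well-defined
intersection numbers `c r s t`. -/
structure AssocScheme (Ω : Type*) [Fintype Ω] [DecidableEq Ω] where
  S : Finset (BRel Ω)
  nonempty : ∀ s ∈ S, s.Nonempty
  partition : ∀ p : Ω × Ω, ∃! s, s ∈ S ∧ p ∈ s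
  diag_mem : diagRel Ω ∈ S
  conv_mem : ∀ s ∈ S, convRel s ∈ S
  c : BRel Ω → BRel Ω → BRel Ω → ℕ
  c_spec : ∀ r ∈ S, ∀ s ∈ S, ∀ t ∈ S, ∀ p ∈ t,
    (Finset.univ.filter (fun γ => (p.1, γ) ∈ r ∧ (γ, p.2) ∈ s)).card = c r s t

namespace AssocScheme

variable (X : AssocScheme Ω)

/-- The valency `n_s = c_{s,s*}^{1}`. -/
def n (s : BRel Ω) : ℕ := X.c s (convRel s) (diagRel Ω)

/-- The complex product `rs` of two basis relations: all `t ∈ S` with `c_{r,s}^t ≠ 0`. -/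
def cp (r s : BRel Ω) : Finset (BRel Ω) := X.S.filter (fun t => X.c r s t ≠ 0)

/-- The complex product of two sets of basis relations. -/
def cpS (A B : Finset (BRel Ω)) : Finset (BRel Ω) :=
  A.biUnion fun a => B.biUnion fun b => X.cp a b

/-- `S_k`: the basis relations of valency `k`. -/
def Sk (k : ℕ) : Finset (BRel Ω) := X.S.filter (fun s => X.n s = k)

/-- `x ∼ y`: every `s` in the complex product `x*y` satisfies `c_{x,s}^y = 1`. -/
def adj (x y : BRel Ω) : Prop := ∀ s ∈ X.cp (convRel x) y, X.c x s y = 1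

/-- `r(α,β)`: the unique basis relation containing `(α,β)`. -/
noncomputable def rel (α β : Ω) : BRel Ω := (X.partition (α, β)).choose

/-- The indistinguishing number `c(s) = Σ_t c_{t,t*}^s`. -/
def ind (s : BRel Ω) : ℕ := ∑ t ∈ X.S, X.c t (convRel t) s

/-- `k`-saturated: every at most four element subset of `S_k` has a common neighbor. -/
def kSaturated (k : ℕ) : Prop :=
  ∀ T ⊆ X.Sk k, T.card ≤ 4 → ∃ y ∈ X.Sk k, ∀ x ∈ T, X.adj y x

/-- `r ∈ x*z` and `s ∈ z*y` are linked with respect to `(x,y,z)`, with witness `t`. -/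
def linked (k : ℕ) (x y z r s t : BRel Ω) : Prop :=
  ∃ q ∈ X.Sk k, X.adj q x ∧ X.adj q y ∧ X.adj q z ∧
    ∃ u ∈ X.cp (convRel x) q, ∃ v ∈ X.cp (convRel y) q, ∃ w ∈ X.cp (convRel z) q,
      t ∈ X.cp r s ∧
      X.cp (convRel x) z ∩ X.cp u (convRel w) = {r} ∧
      X.cp (convRel z) y ∩ X.cp w (convRel v) = {s} ∧
      X.cp (convRel x) y ∩ X.cp u (convRel v) = {t}

/-- Desarguesian with respect to `S_k`. -/
def Desarguesian (k : ℕ) : Prop :=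
  ∀ x ∈ X.Sk k, ∀ y ∈ X.Sk k, ∀ z ∈ X.Sk k, X.adj x z → X.adj z y →
    ∀ r ∈ X.cp (convRel x) z, ∀ s ∈ X.cp (convRel z) y, ∃ t, X.linked k x y z r s t

end AssocScheme

/-- `αr = {β : (α,β) ∈ r}`. -/
def relImage (r : BRel Ω) (α : Ω) : Finset Ω := (r.filter (fun p => p.1 = α)).image Prod.snd

/-- The restriction `r_{x,y} = r ∩ (αx × αy)`. -/
def restrictRel (α : Ω) (r x y : BRel Ω) : BRel Ω :=
  r.filter (fun p => p.1 ∈ relImage x α ∧ p.2 ∈ relImage y α)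


/-- An algebraic isomorphism: a bijection between the sets of basis relations
preserving all intersection numbers. -/
def AlgIso {Ω Ω' : Type*} [Fintype Ω] [DecidableEq Ω] [Fintype Ω'] [DecidableEq Ω']
    (X : AssocScheme Ω) (X' : AssocScheme Ω') (φ : BRel Ω → BRel Ω') : Prop :=
  Set.BijOn φ ↑X.S ↑X'.S ∧
    ∀ r ∈ X.S, ∀ s ∈ X.S, ∀ t ∈ X.S, X.c r s t = X'.c (φ r) (φ s) (φ t)

/-- A `φ`-faithful map with domain `D`. -/
def Faithful {Ω Ω' : Type*} [Fintype Ω] [DecidableEq Ω] [Fintype Ω'] [DecidableEq Ω']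
    (X : AssocScheme Ω) (X' : AssocScheme Ω') (φ : BRel Ω → BRel Ω')
    (D : Finset Ω) (f : Ω → Ω') : Prop :=
  Set.InjOn f ↑D ∧ ∀ a ∈ D, ∀ b ∈ D, φ (X.rel a b) = X'.rel (f a) (f b)

/-- `f` is `φ`-extendable to the point `γ`. -/
def ExtendableAt {Ω Ω' : Type*} [Fintype Ω] [DecidableEq Ω] [Fintype Ω'] [DecidableEq Ω']
    (X : AssocScheme Ω) (X' : AssocScheme Ω') (φ : BRel Ω → BRel Ω')
    (D : Finset Ω) (f : Ω → Ω') (γ : Ω) : Prop :=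
  ∃ g : Ω → Ω', (∀ a ∈ D, g a = f a) ∧ Faithful X X' φ (insert γ D) g



section Helpers
set_option linter.unusedSectionVars false

variable {Ω : Type*} [Fintype Ω] [DecidableEq Ω]

lemma mem_convRel {r : BRel Ω} {a b : Ω} : (a, b) ∈ convRel r ↔ (b, a) ∈ r := by
  simp [convRel, Prod.ext_iff]

lemma mem_diagRel {a b : Ω} : (a, b) ∈ diagRel Ω ↔ a = b := by
  simp [diagRel]

lemma convRel_convRel (r : BRel Ω) : convRel (convRel r) = r := by
  ext ⟨a, b⟩; simp [mem_convRel]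

lemma convRel_diagRel : convRel (diagRel Ω) = diagRel Ω := by
  ext ⟨a, b⟩; simp [mem_convRel, mem_diagRel, eq_comm]

namespace AssocScheme

variable (X : AssocScheme Ω)

lemma rel_mem (α β : Ω) : X.rel α β ∈ X.S :=
  (X.partition (α, β)).choose_spec.1.1

lemma mem_rel (α β : Ω) : (α, β) ∈ X.rel α β :=
  (X.partition (α, β)).choose_spec.1.2

lemma rel_unique {s : BRel Ω} {α β : Ω} (hs : s ∈ X.S) (hp : (α, β) ∈ s) :
    s = X.rel α β :=
  (X.partition (α, β)).choose_spec.2 s ⟨hs, hp⟩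

lemma mem_of_mem_S_unique {s t : BRel Ω} {p : Ω × Ω} (hs : s ∈ X.S) (ht : t ∈ X.S)
    (hps : p ∈ s) (hpt : p ∈ t) : s = t := by
  obtain ⟨α, β⟩ := p
  rw [X.rel_unique hs hps, X.rel_unique ht hpt]

lemma sum_partition (p : Ω × Ω) :
    (∑ y ∈ X.S, if p ∈ y then 1 else 0) = 1 := by
  obtain ⟨α, β⟩ := p
  rw [Finset.sum_eq_single_of_mem (X.rel α β) (X.rel_mem α β)]
  · simp [X.mem_rel α β]
  · intro y hy hne
    rw [if_neg]
    intro hmem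
    exact hne (X.rel_unique hy hmem)

lemma sum_partition_pair (γ δ β : Ω) :
    (∑ y ∈ X.S, if (γ, β) ∈ y ∧ (δ, β) ∈ y then 1 else 0)
      = if X.rel γ β = X.rel δ β then 1 else 0 := by
  rw [Finset.sum_eq_single_of_mem (X.rel γ β) (X.rel_mem γ β)]
  · by_cases h : (δ, β) ∈ X.rel γ β
    · rw [if_pos ⟨X.mem_rel γ β, h⟩, if_pos (X.rel_unique (X.rel_mem γ β) h)]
    · rw [if_neg (fun hc => h hc.2), if_neg]
      intro he
      exact h (he ▸ X.mem_rel δ β)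
  · intro y hy hne
    rw [if_neg]
    rintro ⟨h1, _⟩
    exact hne (X.rel_unique hy h1)

/-- `|αs| = n_s` for every point `α`. -/
lemma card_slice {s : BRel Ω} (hs : s ∈ X.S) (α : Ω) :
    (Finset.univ.filter (fun γ => (α, γ) ∈ s)).card = X.n s := by
  have h := X.c_spec s hs (convRel s) (X.conv_mem s hs) (diagRel Ω) X.diag_mem
    (α, α) (by simp [mem_diagRel])
  rw [AssocScheme.n, ← h]
  congr 1
  apply Finset.filter_congr
  intro γ _
  simp only [mem_convRel]
  tauto

lemma n_pos {s : BRel Ω} (hs : s ∈ X.S) : 1 ≤ X.n s := by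
  obtain ⟨⟨γ, δ⟩, hgd⟩ := X.nonempty s hs
  rw [← X.card_slice hs γ]
  exact Finset.card_pos.mpr ⟨δ, by simp [hgd]⟩

lemma n_diag [Nonempty Ω] : X.n (diagRel Ω) = 1 := by
  obtain ⟨α⟩ := ‹Nonempty Ω›
  rw [← X.card_slice X.diag_mem α]
  rw [show (Finset.univ.filter (fun γ : Ω => (α, γ) ∈ diagRel Ω)) = {α} by
    ext γ; simp [mem_diagRel, eq_comm]]
  simp

lemma card_as_sum (x : BRel Ω) :
    (∑ α : Ω, ∑ β : Ω, if (α, β) ∈ x then 1 else 0) = x.card := by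
  rw [← Fintype.sum_prod_type']
  rw [Finset.sum_boole]
  norm_cast
  congr 1
  ext ⟨a, b⟩
  simp

lemma card_rel {x : BRel Ω} (hx : x ∈ X.S) : x.card = Fintype.card Ω * X.n x := by
  rw [← card_as_sum]
  rw [Finset.sum_congr rfl (fun α _ => ?_)]
  · rw [Finset.sum_const, Finset.card_univ, smul_eq_mul]
  · rw [← X.card_slice hx α, Finset.card_filter]

/-- `n_t c_{r s}^t = n_s c_{r* t}^s`, in the form needed. -/
lemma c_transpose [Nonempty Ω] {x y s : BRel Ω} (hx : x ∈ X.S) (hy : y ∈ X.S)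
    (hs : s ∈ X.S) : X.n x * X.c y s x = X.n s * X.c (convRel y) x s := by
  have key : ∀ T : Ω → Ω → Ω → Prop, ∀ [∀ a b c, Decidable (T a b c)], True := fun _ _ => trivial
  have E1 : (∑ α : Ω, ∑ β : Ω, ∑ γ : Ω,
      if (α, γ) ∈ y ∧ (γ, β) ∈ s ∧ (α, β) ∈ x then 1 else 0)
      = x.card * X.c y s x := by
    have step : ∀ α β : Ω, (∑ γ : Ω, if (α, γ) ∈ y ∧ (γ, β) ∈ s ∧ (α, β) ∈ x then 1 else 0)
        = if (α, β) ∈ x then X.c y s x else 0 := by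
      intro α β
      by_cases hab : (α, β) ∈ x
      · rw [if_pos hab, ← X.c_spec y hy s hs x hx (α, β) hab, Finset.card_filter]
        exact Finset.sum_congr rfl (fun γ _ => by simp [hab])
      · simp only [hab, and_false, if_false, Finset.sum_const_zero, if_neg hab]
    calc (∑ α : Ω, ∑ β : Ω, ∑ γ : Ω,
        if (α, γ) ∈ y ∧ (γ, β) ∈ s ∧ (α, β) ∈ x then 1 else 0)
        = ∑ α : Ω, ∑ β : Ω, if (α, β) ∈ x then X.c y s x else 0 := by
          exact Finset.sum_congr rfl (fun α _ => Finset.sum_congr rfl (fun β _ => step α β))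
      _ = ∑ α : Ω, ∑ β : Ω, X.c y s x * (if (α, β) ∈ x then 1 else 0) := by
          exact Finset.sum_congr rfl (fun α _ => Finset.sum_congr rfl (fun β _ => by
            by_cases h : (α, β) ∈ x <;> simp [h]))
      _ = X.c y s x * ∑ α : Ω, ∑ β : Ω, (if (α, β) ∈ x then 1 else 0) := by
          rw [Finset.mul_sum]
          exact Finset.sum_congr rfl (fun α _ => (Finset.mul_sum _ _ _).symm)
      _ = x.card * X.c y s x := by rw [card_as_sum, Nat.mul_comm]
  have E2 : (∑ α : Ω, ∑ β : Ω, ∑ γ : Ω,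
      if (α, γ) ∈ y ∧ (γ, β) ∈ s ∧ (α, β) ∈ x then 1 else 0)
      = s.card * X.c (convRel y) x s := by
    have swap1 : (∑ α : Ω, ∑ β : Ω, ∑ γ : Ω,
        if (α, γ) ∈ y ∧ (γ, β) ∈ s ∧ (α, β) ∈ x then 1 else 0)
        = ∑ γ : Ω, ∑ β : Ω, ∑ α : Ω,
        if (α, γ) ∈ y ∧ (γ, β) ∈ s ∧ (α, β) ∈ x then 1 else 0 := by
      calc (∑ α : Ω, ∑ β : Ω, ∑ γ : Ω,
          if (α, γ) ∈ y ∧ (γ, β) ∈ s ∧ (α, β) ∈ x then 1 else 0)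
          = ∑ α : Ω, ∑ γ : Ω, ∑ β : Ω,
            if (α, γ) ∈ y ∧ (γ, β) ∈ s ∧ (α, β) ∈ x then 1 else 0 :=
          Finset.sum_congr rfl (fun α _ => Finset.sum_comm)
        _ = ∑ γ : Ω, ∑ α : Ω, ∑ β : Ω,
            if (α, γ) ∈ y ∧ (γ, β) ∈ s ∧ (α, β) ∈ x then 1 else 0 :=
          Finset.sum_comm
        _ = ∑ γ : Ω, ∑ β : Ω, ∑ α : Ω,
            if (α, γ) ∈ y ∧ (γ, β) ∈ s ∧ (α, β) ∈ x then 1 else 0 :=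
          Finset.sum_congr rfl (fun γ _ => Finset.sum_comm)
    rw [swap1]
    have step : ∀ γ β : Ω, (∑ α : Ω, if (α, γ) ∈ y ∧ (γ, β) ∈ s ∧ (α, β) ∈ x then 1 else 0)
        = if (γ, β) ∈ s then X.c (convRel y) x s else 0 := by
      intro γ β
      by_cases hgb : (γ, β) ∈ s
      · rw [if_pos hgb,
          ← X.c_spec (convRel y) (X.conv_mem y hy) x hx s hs (γ, β) hgb, Finset.card_filter]
        exact Finset.sum_congr rfl (fun α _ => by simp [hgb, mem_convRel])
      · simp only [hgb, false_and, and_false, if_false, Finset.sum_const_zero, if_neg hgb]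
    calc (∑ γ : Ω, ∑ β : Ω, ∑ α : Ω,
        if (α, γ) ∈ y ∧ (γ, β) ∈ s ∧ (α, β) ∈ x then 1 else 0)
        = ∑ γ : Ω, ∑ β : Ω, if (γ, β) ∈ s then X.c (convRel y) x s else 0 := by
          exact Finset.sum_congr rfl (fun γ _ => Finset.sum_congr rfl (fun β _ => step γ β))
      _ = ∑ γ : Ω, ∑ β : Ω, X.c (convRel y) x s * (if (γ, β) ∈ s then 1 else 0) := by
          exact Finset.sum_congr rfl (fun γ _ => Finset.sum_congr rfl (fun β _ => by
            by_cases h : (γ, β) ∈ s <;> simp [h]))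
      _ = X.c (convRel y) x s * ∑ γ : Ω, ∑ β : Ω, (if (γ, β) ∈ s then 1 else 0) := by
          rw [Finset.mul_sum]
          exact Finset.sum_congr rfl (fun γ _ => (Finset.mul_sum _ _ _).symm)
      _ = s.card * X.c (convRel y) x s := by rw [card_as_sum, Nat.mul_comm]
  have h := E1.symm.trans E2
  rw [X.card_rel hx, X.card_rel hs, Nat.mul_assoc, Nat.mul_assoc] at h
  exact Nat.eq_of_mul_eq_mul_left Fintype.card_pos h

/-- `c_{y* x}^s = c_{x* y}^{s*}`. -/
lemma c_conv_swap {x y s : BRel Ω} (hx : x ∈ X.S) (hy : y ∈ X.S) (hs : s ∈ X.S) :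
    X.c (convRel y) x s = X.c (convRel x) y (convRel s) := by
  obtain ⟨⟨γ, β⟩, hgb⟩ := X.nonempty s hs
  rw [← X.c_spec (convRel y) (X.conv_mem y hy) x hx s hs (γ, β) hgb]
  rw [← X.c_spec (convRel x) (X.conv_mem x hx) y hy (convRel s) (X.conv_mem s hs)
    (β, γ) (mem_convRel.mpr hgb)]
  congr 1
  ext δ
  simp only [Finset.mem_filter, Finset.mem_univ, true_and, mem_convRel]
  tauto

lemma mem_Sk {y : BRel Ω} {k : ℕ} : y ∈ X.Sk k ↔ y ∈ X.S ∧ X.n y = k := by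
  simp [Sk]

lemma sum_ite_const {p : Ω → Prop} [DecidablePred p] (c : ℕ) :
    (∑ γ : Ω, if p γ then c else 0) = c * (∑ γ : Ω, if p γ then 1 else 0) := by
  rw [Finset.mul_sum]
  exact Finset.sum_congr rfl (fun γ _ => by by_cases h : p γ <;> simp [h])

lemma ne_diag_of_Sk [Nonempty Ω] {k : ℕ} (hk : 2 ≤ k) {x : BRel Ω} (hx : x ∈ X.Sk k) :
    x ≠ diagRel Ω := by
  intro h
  have h1 := X.n_diag
  have h2 := (X.mem_Sk.mp hx).2
  rw [h] at h2
  omega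

lemma conv_ne_diag {x : BRel Ω} (hx : x ≠ diagRel Ω) : convRel x ≠ diagRel Ω := by
  intro h
  exact hx (by rw [← convRel_convRel x, h, convRel_diagRel])

/-- If `y ∈ S_k`, `y ≠ x` and all `c_{x* y}^s ≤ 1`, then `y ∼ x`. -/
lemma adj_of_good [Nonempty Ω] {k : ℕ} (hk : 2 ≤ k)
    (hps : ∀ s ∈ X.S, s ≠ diagRel Ω → X.n s = k ∧ X.ind s = k - 1)
    {x y : BRel Ω} (hx : x ∈ X.Sk k) (hy : y ∈ X.Sk k) (hne : y ≠ x)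
    (hgood : ∀ s ∈ X.S, X.c (convRel x) y s ≤ 1) : X.adj y x := by
  intro s hscp
  have hxS : x ∈ X.S := (X.mem_Sk.mp hx).1
  have hyS : y ∈ X.S := (X.mem_Sk.mp hy).1
  rw [cp, Finset.mem_filter] at hscp
  obtain ⟨hsS, hc0⟩ := hscp
  have hsd : s ≠ diagRel Ω := by
    rintro rfl
    obtain ⟨α⟩ := ‹Nonempty Ω›
    have hcs := X.c_spec (convRel y) (X.conv_mem y hyS) x hxS (diagRel Ω) X.diag_mem
      (α, α) (mem_diagRel.mpr rfl)
    rw [← hcs] at hc0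
    obtain ⟨γ, hγ⟩ := Finset.card_pos.mp (Nat.pos_of_ne_zero hc0)
    rw [Finset.mem_filter] at hγ
    obtain ⟨-, h1, h2⟩ := hγ
    exact hne (X.mem_of_mem_S_unique hyS hxS (mem_convRel.mp h1) h2)
  have hnxk : X.n x = k := (X.mem_Sk.mp hx).2
  have hnsk : X.n s = k := (hps s hsS hsd).1
  have h1 := X.c_transpose hxS hyS hsS
  rw [hnxk, hnsk] at h1
  have h2 : X.c y s x = X.c (convRel y) x s := Nat.eq_of_mul_eq_mul_left (by omega) h1
  have h3 := X.c_conv_swap hxS hyS hsS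
  have h4 := hgood (convRel s) (X.conv_mem s hsS)
  omega

lemma count_same_rel_le [Nonempty Ω] {k : ℕ}
    (hps : ∀ s ∈ X.S, s ≠ diagRel Ω → X.n s = k ∧ X.ind s = k - 1)
    {γ δ : Ω} (hne : γ ≠ δ) :
    (∑ β : Ω, if X.rel γ β = X.rel δ β then 1 else 0) ≤ k - 1 := by
  have e1 : ∀ β : Ω, (if X.rel γ β = X.rel δ β then 1 else 0)
      = ∑ t ∈ X.S, if (γ, β) ∈ t ∧ (δ, β) ∈ t then 1 else 0 :=
    fun β => (X.sum_partition_pair γ δ β).symm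
  rw [Finset.sum_congr rfl (fun β _ => e1 β), Finset.sum_comm]
  have e2 : ∀ t ∈ X.S, (∑ β : Ω, if (γ, β) ∈ t ∧ (δ, β) ∈ t then 1 else 0)
      = X.c t (convRel t) (X.rel γ δ) := by
    intro t ht
    rw [← X.c_spec t ht (convRel t) (X.conv_mem t ht) (X.rel γ δ) (X.rel_mem γ δ)
      (γ, δ) (X.mem_rel γ δ), Finset.card_filter]
    exact Finset.sum_congr rfl (fun β _ => by simp [mem_convRel])
  rw [Finset.sum_congr rfl e2]
  have hd : X.rel γ δ ≠ diagRel Ω := fun h => hne (mem_diagRel.mp (h ▸ X.mem_rel γ δ))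
  exact ((hps _ (X.rel_mem γ δ) hd).2).le

/-- The key counting bound: the set of `y ∈ S_k` that are "bad" for `x` is small. -/
lemma card_bad_le [Nonempty Ω] {k : ℕ} (hk : 2 ≤ k)
    (hps : ∀ s ∈ X.S, s ≠ diagRel Ω → X.n s = k ∧ X.ind s = k - 1)
    {x : BRel Ω} (hx : x ∈ X.Sk k) :
    ((X.Sk k).filter (fun y => y ≠ x ∧ ∃ s ∈ X.S, 2 ≤ X.c (convRel x) y s)).card
      ≤ k * k * (k - 1) := by
  obtain ⟨α⟩ := ‹Nonempty Ω›
  have hxS : x ∈ X.S := (X.mem_Sk.mp hx).1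
  have hxd : x ≠ diagRel Ω := X.ne_diag_of_Sk hk hx
  have hconvS : convRel x ∈ X.S := X.conv_mem x hxS
  have hnk : X.n (convRel x) = k := (hps _ hconvS (conv_ne_diag hxd)).1
  have hPcard : (∑ γ : Ω, if (α, γ) ∈ convRel x then 1 else 0) = k := by
    rw [← Finset.card_filter, X.card_slice hconvS α, hnk]
  set N := Fintype.card Ω with hN
  set C : BRel Ω → Ω → ℕ :=
    fun y β => (Finset.univ.filter (fun γ => (α, γ) ∈ convRel x ∧ (γ, β) ∈ y)).card with hCdef
  set Bad := (X.Sk k).filter (fun y => y ≠ x ∧ ∃ s ∈ X.S, 2 ≤ X.c (convRel x) y s) with hBad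
  have hBadS : Bad ⊆ X.S := (Finset.filter_subset _ _).trans (Finset.filter_subset _ _)
  have hCc : ∀ y ∈ X.S, ∀ β, C y β = X.c (convRel x) y (X.rel α β) := fun y hy β =>
    X.c_spec (convRel x) hconvS y hy (X.rel α β) (X.rel_mem α β) (α, β) (X.mem_rel α β)
  -- middle: ∑_{y∈S} ∑_β C y β = N * k
  have hmid : (∑ y ∈ X.S, ∑ β : Ω, C y β) = N * k := by
    have e1 : ∀ y : BRel Ω, ∀ β : Ω,
        C y β = ∑ γ : Ω, if (α, γ) ∈ convRel x ∧ (γ, β) ∈ y then 1 else 0 :=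
      fun y β => Finset.card_filter _ _
    calc (∑ y ∈ X.S, ∑ β : Ω, C y β)
        = ∑ β : Ω, ∑ γ : Ω, ∑ y ∈ X.S,
            (if (α, γ) ∈ convRel x ∧ (γ, β) ∈ y then 1 else 0) := by
          rw [Finset.sum_comm]
          exact Finset.sum_congr rfl (fun β _ => by
            rw [Finset.sum_congr rfl (fun y _ => e1 y β), Finset.sum_comm])
      _ = ∑ β : Ω, ∑ γ : Ω, (if (α, γ) ∈ convRel x then 1 else 0) := by
          refine Finset.sum_congr rfl (fun β _ => Finset.sum_congr rfl (fun γ _ => ?_))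
          by_cases hP : (α, γ) ∈ convRel x
          · simp only [hP, true_and, if_true]
            exact X.sum_partition (γ, β)
          · simp [hP]
      _ = N * k := by
          rw [Finset.sum_congr rfl (fun β (_ : β ∈ Finset.univ) => hPcard),
            Finset.sum_const, Finset.card_univ, smul_eq_mul]
  -- lower bound
  have lower : N * k + 2 * Bad.card ≤ ∑ y ∈ X.S, ∑ β : Ω, C y β * C y β := by
    have sq : ∀ c : ℕ, c * c = c + c * (c - 1) := by
      intro c
      cases c with
      | zero => rfl
      | succ m => simp [Nat.succ_sub_one]; ring
    have split : (∑ y ∈ X.S, ∑ β : Ω, C y β * C y β)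
        = (∑ y ∈ X.S, ∑ β : Ω, C y β) + ∑ y ∈ X.S, ∑ β : Ω, C y β * (C y β - 1) := by
      rw [← Finset.sum_add_distrib]
      exact Finset.sum_congr rfl (fun y _ => by
        rw [← Finset.sum_add_distrib]
        exact Finset.sum_congr rfl (fun β _ => sq _))
    rw [split, hmid]
    have hterm : ∀ y ∈ Bad, 2 ≤ ∑ β : Ω, C y β * (C y β - 1) := by
      intro y hyB
      rw [hBad, Finset.mem_filter] at hyB
      obtain ⟨hySk, hyne, s₀, hs₀S, hs₀2⟩ := hyB
      have hβ : (Finset.univ.filter (fun β => (α, β) ∈ s₀)).Nonempty := by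
        apply Finset.card_pos.mp
        rw [X.card_slice hs₀S α]
        exact X.n_pos hs₀S
      obtain ⟨β₀, hβ₀⟩ := hβ
      rw [Finset.mem_filter] at hβ₀
      have hrel : X.rel α β₀ = s₀ := (X.rel_unique hs₀S hβ₀.2).symm
      have hC2 : 2 ≤ C y β₀ := by
        rw [hCc y (X.mem_Sk.mp hySk).1 β₀, hrel]
        exact hs₀2
      calc 2 = 2 * 1 := rfl
        _ ≤ C y β₀ * (C y β₀ - 1) := Nat.mul_le_mul hC2 (by omega)
        _ ≤ ∑ β : Ω, C y β * (C y β - 1) :=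
            Finset.single_le_sum (f := fun β => C y β * (C y β - 1))
              (fun _ _ => Nat.zero_le _) (Finset.mem_univ β₀)
    have : 2 * Bad.card ≤ ∑ y ∈ X.S, ∑ β : Ω, C y β * (C y β - 1) := by
      calc 2 * Bad.card = ∑ _y ∈ Bad, 2 := by rw [Finset.sum_const, smul_eq_mul, Nat.mul_comm]
        _ ≤ ∑ y ∈ Bad, ∑ β : Ω, C y β * (C y β - 1) := Finset.sum_le_sum hterm
        _ ≤ ∑ y ∈ X.S, ∑ β : Ω, C y β * (C y β - 1) :=
            Finset.sum_le_sum_of_subset hBadS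
    omega
  -- upper bound
  have upper : (∑ y ∈ X.S, ∑ β : Ω, C y β * C y β) ≤ N * k + k * k * (k - 1) := by
    have expand : ∀ y : BRel Ω, ∀ β : Ω, C y β * C y β
        = ∑ γ : Ω, ∑ δ : Ω, if ((α, γ) ∈ convRel x ∧ (γ, β) ∈ y)
            ∧ ((α, δ) ∈ convRel x ∧ (δ, β) ∈ y) then 1 else 0 := by
      intro y β
      rw [show C y β = ∑ γ : Ω, if (α, γ) ∈ convRel x ∧ (γ, β) ∈ y then 1 else 0 from
        Finset.card_filter _ _]
      rw [Finset.sum_mul_sum]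
      refine Finset.sum_congr rfl (fun γ _ => Finset.sum_congr rfl (fun δ _ => ?_))
      by_cases h1 : (α, γ) ∈ convRel x ∧ (γ, β) ∈ y <;>
        by_cases h2 : (α, δ) ∈ convRel x ∧ (δ, β) ∈ y <;> simp [h1, h2]
    have reorder : (∑ y ∈ X.S, ∑ β : Ω, C y β * C y β)
        = ∑ γ : Ω, ∑ δ : Ω, ∑ β : Ω, ∑ y ∈ X.S,
            (if ((α, γ) ∈ convRel x ∧ (γ, β) ∈ y)
              ∧ ((α, δ) ∈ convRel x ∧ (δ, β) ∈ y) then 1 else 0) := by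
      calc (∑ y ∈ X.S, ∑ β : Ω, C y β * C y β)
          = ∑ β : Ω, ∑ y ∈ X.S, ∑ γ : Ω, ∑ δ : Ω,
              (if ((α, γ) ∈ convRel x ∧ (γ, β) ∈ y)
                ∧ ((α, δ) ∈ convRel x ∧ (δ, β) ∈ y) then 1 else 0) := by
            rw [Finset.sum_comm]
            exact Finset.sum_congr rfl (fun β _ =>
              Finset.sum_congr rfl (fun y _ => expand y β))
        _ = ∑ β : Ω, ∑ γ : Ω, ∑ δ : Ω, ∑ y ∈ X.S, _ := by
            exact Finset.sum_congr rfl (fun β _ => by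
              rw [Finset.sum_comm]
              exact Finset.sum_congr rfl (fun γ _ => Finset.sum_comm))
        _ = ∑ γ : Ω, ∑ β : Ω, ∑ δ : Ω, ∑ y ∈ X.S, _ := Finset.sum_comm
        _ = ∑ γ : Ω, ∑ δ : Ω, ∑ β : Ω, ∑ y ∈ X.S, _ :=
            Finset.sum_congr rfl (fun γ _ => Finset.sum_comm)
    rw [reorder]
    have inner : ∀ γ δ β : Ω, (∑ y ∈ X.S,
        (if ((α, γ) ∈ convRel x ∧ (γ, β) ∈ y)
          ∧ ((α, δ) ∈ convRel x ∧ (δ, β) ∈ y) then 1 else 0))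
        = if (α, γ) ∈ convRel x ∧ (α, δ) ∈ convRel x then
            (if X.rel γ β = X.rel δ β then 1 else 0) else 0 := by
      intro γ δ β
      by_cases hP : (α, γ) ∈ convRel x ∧ (α, δ) ∈ convRel x
      · rw [if_pos hP, ← X.sum_partition_pair γ δ β]
        exact Finset.sum_congr rfl (fun y _ => by simp [hP.1, hP.2])
      · rw [if_neg hP]
        apply Finset.sum_eq_zero
        intro y _
        rw [if_neg]
        tauto
    rw [Finset.sum_congr rfl (fun γ _ => Finset.sum_congr rfl (fun δ _ =>
      Finset.sum_congr rfl (fun β _ => inner γ δ β)))]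
    have pullout : ∀ γ δ : Ω, (∑ β : Ω, if (α, γ) ∈ convRel x ∧ (α, δ) ∈ convRel x then
        (if X.rel γ β = X.rel δ β then 1 else 0) else 0)
        = if (α, γ) ∈ convRel x ∧ (α, δ) ∈ convRel x then
            (∑ β : Ω, if X.rel γ β = X.rel δ β then 1 else 0) else 0 := by
      intro γ δ
      by_cases hP : (α, γ) ∈ convRel x ∧ (α, δ) ∈ convRel x <;> simp [hP]
    rw [Finset.sum_congr rfl (fun γ _ => Finset.sum_congr rfl (fun δ _ => pullout γ δ))]
    -- split the diagonal
    have splitdiag : ∀ γ : Ω, (∑ δ : Ω, if (α, γ) ∈ convRel x ∧ (α, δ) ∈ convRel x then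
        (∑ β : Ω, if X.rel γ β = X.rel δ β then 1 else 0) else 0)
        ≤ (if (α, γ) ∈ convRel x then N + k * (k - 1) else 0) := by
      intro γ
      rw [← Finset.add_sum_erase Finset.univ _ (Finset.mem_univ γ)]
      have hdiagterm : (if (α, γ) ∈ convRel x ∧ (α, γ) ∈ convRel x then
          (∑ β : Ω, if X.rel γ β = X.rel γ β then 1 else 0) else 0)
          = if (α, γ) ∈ convRel x then N else 0 := by
        by_cases hP : (α, γ) ∈ convRel x <;> simp [hP, hN, Finset.card_univ]
      rw [hdiagterm]
      have hoff : (∑ δ ∈ Finset.univ.erase γ,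
          if (α, γ) ∈ convRel x ∧ (α, δ) ∈ convRel x then
            (∑ β : Ω, if X.rel γ β = X.rel δ β then 1 else 0) else 0)
          ≤ if (α, γ) ∈ convRel x then k * (k - 1) else 0 := by
        by_cases hPγ : (α, γ) ∈ convRel x
        · rw [if_pos hPγ]
          calc (∑ δ ∈ Finset.univ.erase γ,
              if (α, γ) ∈ convRel x ∧ (α, δ) ∈ convRel x then
                (∑ β : Ω, if X.rel γ β = X.rel δ β then 1 else 0) else 0)
              ≤ ∑ δ ∈ Finset.univ.erase γ,
                (if (α, δ) ∈ convRel x then k - 1 else 0) := by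
                apply Finset.sum_le_sum
                intro δ hδ
                have hδγ : δ ≠ γ := (Finset.mem_erase.mp hδ).1
                by_cases hPδ : (α, δ) ∈ convRel x
                · rw [if_pos ⟨hPγ, hPδ⟩, if_pos hPδ]
                  exact X.count_same_rel_le hps (hδγ.symm)
                · simp [hPδ]
            _ ≤ ∑ δ : Ω, (if (α, δ) ∈ convRel x then k - 1 else 0) :=
                Finset.sum_le_sum_of_subset (Finset.erase_subset _ _)
            _ = (k - 1) * k := by rw [sum_ite_const, hPcard]
            _ = k * (k - 1) := Nat.mul_comm _ _
        · rw [if_neg hPγ]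
          apply Nat.le_of_eq
          apply Finset.sum_eq_zero
          intro δ _
          rw [if_neg]
          tauto
      calc (if (α, γ) ∈ convRel x then N else 0) + _
          ≤ (if (α, γ) ∈ convRel x then N else 0)
            + (if (α, γ) ∈ convRel x then k * (k - 1) else 0) := Nat.add_le_add_left hoff _
        _ = if (α, γ) ∈ convRel x then N + k * (k - 1) else 0 := by
            by_cases hP : (α, γ) ∈ convRel x <;> simp [hP]
    calc (∑ γ : Ω, ∑ δ : Ω, if (α, γ) ∈ convRel x ∧ (α, δ) ∈ convRel x then
          (∑ β : Ω, if X.rel γ β = X.rel δ β then 1 else 0) else 0)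
        ≤ ∑ γ : Ω, (if (α, γ) ∈ convRel x then N + k * (k - 1) else 0) :=
          Finset.sum_le_sum (fun γ _ => splitdiag γ)
      _ = (N + k * (k - 1)) * k := by rw [sum_ite_const, hPcard]
      _ = N * k + k * k * (k - 1) := by ring
  omega

end AssocScheme

end Helpers

theorem pseudocyclic_saturated (X : AssocScheme Ω) (k : ℕ) (hk : 2 ≤ k)
    (hps : ∀ s ∈ X.S, s ≠ diagRel Ω → X.n s = k ∧ X.ind s = k - 1)
    (hn : Fintype.card Ω > 3 * k ^ 6) :
    X.kSaturated k := by
  have hn0 : 0 < Fintype.card Ω := lt_of_le_of_lt (Nat.zero_le _) hn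
  have hΩ : Nonempty Ω := Fintype.card_pos_iff.mp hn0
  obtain ⟨α⟩ := id hΩ
  have hSk_eq : X.Sk k = X.S.erase (diagRel Ω) := by
    ext s
    rw [X.mem_Sk, Finset.mem_erase]
    constructor
    · rintro ⟨hs, hns⟩
      refine ⟨fun h => ?_, hs⟩
      rw [h] at hns
      have := X.n_diag
      omega
    · rintro ⟨hne, hs⟩
      exact ⟨hs, (hps s hs hne).1⟩
  have hsum : (∑ s ∈ X.S, X.n s) = Fintype.card Ω := by
    calc (∑ s ∈ X.S, X.n s)
        = ∑ s ∈ X.S, ∑ β : Ω, (if (α, β) ∈ s then 1 else 0) :=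
          Finset.sum_congr rfl (fun s hs => by
            rw [← X.card_slice hs α, Finset.card_filter])
      _ = ∑ β : Ω, ∑ s ∈ X.S, (if (α, β) ∈ s then 1 else 0) := Finset.sum_comm
      _ = ∑ β : Ω, 1 := Finset.sum_congr rfl (fun β _ => X.sum_partition (α, β))
      _ = Fintype.card Ω := by simp
  have hcard : Fintype.card Ω = 1 + k * (X.Sk k).card := by
    rw [← hsum, ← Finset.add_sum_erase X.S X.n X.diag_mem, X.n_diag]
    congr 1
    calc (∑ s ∈ X.S.erase (diagRel Ω), X.n s)
        = ∑ _s ∈ X.S.erase (diagRel Ω), k :=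
          Finset.sum_congr rfl (fun s hs => by
            rw [Finset.mem_erase] at hs
            exact (hps s hs.2 hs.1).1)
      _ = k * (X.Sk k).card := by
          rw [Finset.sum_const, smul_eq_mul, hSk_eq, Nat.mul_comm]
  intro T hT hT4
  classical
  set Bad : BRel Ω → Finset (BRel Ω) := fun x =>
    (X.Sk k).filter (fun y => y ≠ x ∧ ∃ s ∈ X.S, 2 ≤ X.c (convRel x) y s) with hBadDef
  set B := T ∪ T.biUnion Bad with hBdef
  have hBsub : B ⊆ X.Sk k := by
    apply Finset.union_subset hT
    intro y hy
    obtain ⟨x, _, hyx⟩ := Finset.mem_biUnion.mp hy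
    exact (Finset.filter_subset _ _) hyx
  have hBcard : B.card ≤ 4 + 4 * (k * k * (k - 1)) := by
    calc B.card ≤ T.card + (T.biUnion Bad).card := Finset.card_union_le _ _
      _ ≤ 4 + ∑ x ∈ T, (Bad x).card :=
          Nat.add_le_add hT4 Finset.card_biUnion_le
      _ ≤ 4 + ∑ _x ∈ T, k * k * (k - 1) := by
          apply Nat.add_le_add_left
          exact Finset.sum_le_sum (fun x hx => X.card_bad_le hk hps (hT hx))
      _ ≤ 4 + 4 * (k * k * (k - 1)) := by
          apply Nat.add_le_add_left
          rw [Finset.sum_const, smul_eq_mul]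
          exact Nat.mul_le_mul_right _ hT4
  have hSkcard : 4 + 4 * (k * k * (k - 1)) < (X.Sk k).card := by
    by_contra hcon
    push_neg at hcon
    have h1 : 3 * k ^ 6 < 1 + k * (X.Sk k).card := by rw [← hcard]; exact hn
    have h2 : k * k * (k - 1) ≤ k * k * k := Nat.mul_le_mul_left _ (Nat.sub_le _ _)
    have h3 : (X.Sk k).card ≤ 4 + 4 * (k * k * k) := by omega
    have h4 : k * (X.Sk k).card ≤ 4 * k + 4 * (k * k * k * k) := by
      calc k * (X.Sk k).card ≤ k * (4 + 4 * (k * k * k)) := Nat.mul_le_mul_left _ h3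
        _ = 4 * k + 4 * (k * k * k * k) := by ring
    have h5 : 3 * k ^ 6 < 1 + 4 * k + 4 * (k * k * k * k) := by omega
    have hk2 : 4 ≤ k * k := Nat.mul_le_mul hk hk
    have hkk : k ≤ k * k * k * k := by nlinarith
    nlinarith [h5, hk2, hkk, sq_nonneg k]
  have hnonempty : ((X.Sk k) \ B).Nonempty := by
    rw [← Finset.card_pos, Finset.card_sdiff_of_subset hBsub]
    omega
  obtain ⟨y, hy⟩ := hnonempty
  rw [Finset.mem_sdiff] at hy
  refine ⟨y, hy.1, ?_⟩
  intro x hxT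
  have hx : x ∈ X.Sk k := hT hxT
  have hyne : y ≠ x := fun h => hy.2 (Finset.mem_union_left _ (h ▸ hxT))
  apply X.adj_of_good hk hps hx hy.1 hyne
  intro s hs
  by_contra hcon
  apply hy.2
  apply Finset.mem_union_right
  refine Finset.mem_biUnion.mpr ⟨x, hxT, ?_⟩
  rw [hBadDef, Finset.mem_filter]
  exact ⟨hy.1, hyne, s, hs, by omega⟩
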